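/- Let ω be a complex number with Im(ω) ≠ 0 and let H be a nonzero complex number. Define E_k = Im( g_k(ω) / H ) / Im(ω) for each natural number k. Then for every natural number m, E_{m+1} = Re(ω)·E_m + Re( g_m(ω)/H ) + (1/(m+1)) · Im( 1/H ) / Im(ω). -/

import Mathlib

open Complex Finset

/-- `g m ω = ω^m (Log(1 - 1/ω) + ∑_{k=1}^m 1/(k ω^k))`. -/
noncomputable def g (m : ℕ) (ω : ℂ) : ℂ :=
  ω ^ m * (Complex.log (1 - 1 / ω) + ∑ k ∈ Finset.Icc 1 m, 1 / ((k : ℂ) * ω ^ k))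

lemma g_rec (ω : ℂ) (hω : ω ≠ 0) (m : ℕ) :
    g (m + 1) ω = ω * g m ω + 1 / ((m : ℂ) + 1) := by
  unfold g
  rw [Finset.sum_Icc_succ_top (by omega : 1 ≤ m + 1)]
  have hpow : (ω : ℂ) ^ (m + 1) ≠ 0 := pow_ne_zero _ hω
  have hm : ((m : ℂ) + 1) ≠ 0 := Nat.cast_add_one_ne_zero m
  push_cast
  field_simp
  ring

theorem E_recurrence (ω H : ℂ) (hω : ω.im ≠ 0) (hH : H ≠ 0) (m : ℕ) :
    (g (m + 1) ω / H).im / ω.im =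
      ω.re * ((g m ω / H).im / ω.im) + (g m ω / H).re +
        (1 / ((m : ℝ) + 1)) * (1 / H).im / ω.im := by
  have hω0 : ω ≠ 0 := fun h => hω (by simp [h])
  rw [g_rec ω hω0 m]
  have h1 : (ω * g m ω + 1 / ((m : ℂ) + 1)) / H
      = ω * (g m ω / H) + (1 / ((m : ℂ) + 1)) * (1 / H) := by
    have hm : ((m : ℂ) + 1) ≠ 0 := Nat.cast_add_one_ne_zero m
    field_simp
  rw [h1]
  have him : ((1 : ℂ) / ((m : ℂ) + 1)).im = 0 := by
    simp [Complex.div_im]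
  have hre : ((1 : ℂ) / ((m : ℂ) + 1)).re = 1 / ((m : ℝ) + 1) := by
    have hm : ((m : ℝ) + 1) ≠ 0 := by positivity
    rw [Complex.div_re]
    simp [Complex.normSq_apply]
  simp only [Complex.add_im, Complex.mul_im, him, hre]
  field_simp
  ring
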